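/- Suppose X is a compact, Hausdorff, totally disconnected topological group and G is a dense subgroup of X, acting on X by left multiplication. Let k be a field of characteristic 0, let T be the ring of locally constant functions from X to k, and let α be the induced action of G on T given by (α(g)t)(x) = t(g⁻¹x). Then the skew group ring T*_α G is a simple ring. -/

import Mathlib

/-- `S` is a skew group ring `R*_α G`: the ring hom `ι : R →+* S` and the monoid hom
`σ : G →* S` realize `R` and `G` inside `S`, every element of `S` is uniquely a finite
sum `∑_g ι(r_g) * σ(g)` (so `S` is a free left `R`-module with basis the image of `G`),
and multiplication is twisted by the action: `σ(g) * ι(r) = ι(α(g)(r)) * σ(g)`. -/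
structure IsSkewGroupRing (R : Type*) [Ring R] (G : Type*) [Group G]
    (α : G →* RingAut R) (S : Type*) [Ring S] (ι : R →+* S) (σ : G →* S) : Prop where
  repr_existsUnique : ∀ s : S, ∃! c : G →₀ R, s = c.sum fun g r => ι r * σ g
  commutes : ∀ (g : G) (r : R), σ g * ι r = ι (α g r) * σ g

/-- `R` is `G`-simple (with respect to the action `α : G →* RingAut R`): `R` is nonzero
and the only `G`-invariant two-sided ideals of `R` are `0` and `R`. -/
def IsGSimple (R : Type*) [Ring R] {G : Type*} [Group G] (α : G →* RingAut R) : Prop :=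
  Nontrivial R ∧
    ∀ I : TwoSidedIdeal R, (∀ (g : G), ∀ r ∈ I, α g r ∈ I) → I = ⊥ ∨ I = ⊤

open Classical in
lemma skr_charFn_apply {X : Type*} [TopologicalSpace X] {k : Type*} [Field k]
    {V : Set X} (hV : IsClopen V) (y : X) :
    LocallyConstant.charFn k hV y = if y ∈ V then (1 : k) else 0 := by
  have h := congrFun (LocallyConstant.coe_charFn k hV) y
  rw [h, Set.indicator_apply]
  split <;> simp

lemma skr_aux_top
    {X : Type*} [TopologicalSpace X] [Group X] [IsTopologicalGroup X]
    [CompactSpace X] [T2Space X] [TotallyDisconnectedSpace X]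
    {k : Type*} [Field k] [CharZero k]
    (G : Subgroup X) (hG : Dense (G : Set X))
    (α : G →* RingAut (LocallyConstant X k))
    (hα : ∀ (g : G) (t : LocallyConstant X k) (x : X), α g t x = t ((g : X)⁻¹ * x))
    {S : Type*} [Ring S] (ι : LocallyConstant X k →+* S) (σ : G →* S)
    (hS : IsSkewGroupRing (LocallyConstant X k) G α S ι σ)
    (I : TwoSidedIdeal S) (r : LocallyConstant X k) (hr : r ≠ 0) (hrI : ι r ∈ I) :
    I = ⊤ := by
  classical
  obtain ⟨x₀, hx₀⟩ : ∃ x, r x ≠ 0 := by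
    by_contra h
    push_neg at h
    exact hr (by ext x; simp [h x])
  set U : Set X := {x | r x = r x₀} with hUdef
  have hU : IsClopen U := r.isLocallyConstant.isClopen_fiber (r x₀)
  set χ : LocallyConstant X k := LocallyConstant.charFn k hU with hχdef
  have hχI : ι χ ∈ I := by
    have hmul : (LocallyConstant.const X (r x₀)⁻¹ * χ) * r = χ := by
      ext x
      by_cases hx : x ∈ U
      · have hrx : r x = r x₀ := hx
        show (r x₀)⁻¹ * χ x * r x = χ x
        rw [hχdef, skr_charFn_apply hU x, if_pos hx, hrx, mul_one, inv_mul_cancel₀ hx₀]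
      · show (r x₀)⁻¹ * χ x * r x = χ x
        rw [hχdef, skr_charFn_apply hU x, if_neg hx, mul_zero, zero_mul]
    have := I.mul_mem_left (ι (LocallyConstant.const X (r x₀)⁻¹ * χ)) _ hrI
    rwa [← map_mul, hmul] at this
  have hUg : ∀ g : G, IsClopen ((fun x => (g : X)⁻¹ * x) ⁻¹' U) := fun g =>
    hU.preimage (continuous_const.mul continuous_id)
  have hαχ : ∀ g : G, α g χ = LocallyConstant.charFn k (hUg g) := by
    intro g
    ext x
    rw [hα, hχdef, skr_charFn_apply hU ((g : X)⁻¹ * x), skr_charFn_apply (hUg g) x]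
    rfl
  have hαχI : ∀ g : G, ι (α g χ) ∈ I := by
    intro g
    have h1 : ι (α g χ) * σ g = σ g * ι χ := (hS.commutes g χ).symm
    have h2 : ι (α g χ) = σ g * ι χ * σ g⁻¹ := by
      have h3 := congrArg (· * σ g⁻¹) h1
      simpa [mul_assoc, ← map_mul] using h3
    rw [h2]
    exact I.mul_mem_right _ _ (I.mul_mem_left _ _ hχI)
  have hcover : (Set.univ : Set X) ⊆ ⋃ g : G, (fun x => (g : X)⁻¹ * x) ⁻¹' U := by
    intro x _
    have hVopen : IsOpen ((fun y : X => y⁻¹ * x) ⁻¹' U) :=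
      hU.2.preimage (continuous_inv.mul continuous_const)
    have hVne : ((fun y : X => y⁻¹ * x) ⁻¹' U).Nonempty := by
      refine ⟨x * x₀⁻¹, ?_⟩
      show r ((x * x₀⁻¹)⁻¹ * x) = r x₀
      exact congrArg r (by group)
    obtain ⟨y, hyG, hy⟩ := hG.exists_mem_open hVopen hVne
    exact Set.mem_iUnion.2 ⟨⟨y, hyG⟩, hy⟩
  obtain ⟨F, hF⟩ := IsCompact.elim_finite_subcover isCompact_univ
    (fun g : G => (fun x => (g : X)⁻¹ * x) ⁻¹' U) (fun g => (hUg g).2) hcover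
  set f : LocallyConstant X k := ∑ g ∈ F, α g χ with hfdef
  have hfI : ι f ∈ I := by
    rw [hfdef, map_sum]
    exact sum_mem fun g _ => hαχI g
  have hfne : ∀ x, f x ≠ 0 := by
    intro x
    have hx : ∃ g ∈ F, (g : X)⁻¹ * x ∈ U := by
      have := hF (Set.mem_univ x)
      simpa using this
    have hfx : f x = ∑ g ∈ F, (if (g : X)⁻¹ * x ∈ U then (1 : k) else 0) := by
      rw [hfdef]
      rw [show ((∑ g ∈ F, α g χ) x) = ∑ g ∈ F, (α g χ) x from
        map_sum (LocallyConstant.evalRingHom x) _ F]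
      refine Finset.sum_congr rfl fun g _ => ?_
      rw [hα, hχdef, skr_charFn_apply hU]
    rw [hfx, Finset.sum_boole]
    obtain ⟨g, hgF, hg⟩ := hx
    have hne : (F.filter fun g : G => (g : X)⁻¹ * x ∈ U).Nonempty :=
      ⟨g, Finset.mem_filter.2 ⟨hgF, hg⟩⟩
    exact Nat.cast_ne_zero.2 (Finset.card_ne_zero.2 hne)
  have hfinv : f * f.map (·⁻¹) = 1 := by
    ext x
    show f x * (f x)⁻¹ = 1
    rw [mul_inv_cancel₀ (hfne x)]
  have h1I : (1 : S) ∈ I := by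
    rw [show (1 : S) = ι f * ι (f.map (·⁻¹)) by rw [← map_mul, hfinv, map_one]]
    exact I.mul_mem_right _ _ hfI
  exact I.eq_top h1I

/-- Suppose `X` is a compact Hausdorff totally disconnected topological group and `G` a
dense subgroup of `X`, acting on `X` by left multiplication. Let `k` be a field of
characteristic `0`, `T` the ring of locally constant functions `X → k`, and `α` the
induced action of `G` on `T`, `(α g t) x = t (g⁻¹ x)` (formalized as any homomorphism
`α : G →* RingAut T` satisfying this formula). Then the skew group ring `T*_α G` is a
simple ring. -/
theorem skewGroupRing_locallyConstant_denseSubgroup_isSimpleRing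
    {X : Type*} [TopologicalSpace X] [Group X] [IsTopologicalGroup X]
    [CompactSpace X] [T2Space X] [TotallyDisconnectedSpace X]
    {k : Type*} [Field k] [CharZero k]
    (G : Subgroup X) (hG : Dense (G : Set X))
    (α : G →* RingAut (LocallyConstant X k))
    (hα : ∀ (g : G) (t : LocallyConstant X k) (x : X), α g t x = t ((g : X)⁻¹ * x))
    {S : Type*} [Ring S] (ι : LocallyConstant X k →+* S) (σ : G →* S)
    (hS : IsSkewGroupRing (LocallyConstant X k) G α S ι σ) :
    IsSimpleRing S := by
  classical
  have hTnontriv : (1 : LocallyConstant X k) ≠ 0 := by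
    intro h
    have h1 := congrFun (congrArg DFunLike.coe h) 1
    simp at h1
  -- uniqueness of representations
  have huniq : ∀ (s : S) (c c' : G →₀ LocallyConstant X k),
      s = c.sum (fun g r => ι r * σ g) → s = c'.sum (fun g r => ι r * σ g) → c = c' := by
    intro s c c' h h'
    obtain ⟨c₀, -, hu⟩ := hS.repr_existsUnique s
    rw [hu c h, hu c' h']
  have hzero : ∀ c : G →₀ LocallyConstant X k,
      c.sum (fun g r => ι r * σ g) = 0 → c = 0 := by
    intro c hc
    exact huniq 0 c 0 hc.symm (by rw [Finsupp.sum_zero_index])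
  -- S is nontrivial
  have hSnontriv : Nontrivial S := by
    refine ⟨1, 0, fun h01 => ?_⟩
    have h1 : (1 : S) = (Finsupp.single (1 : G) (1 : LocallyConstant X k)).sum
        (fun g r => ι r * σ g) := by
      rw [Finsupp.sum_single_index (by simp)]
      simp
    have hc := hzero _ (by rw [← h1]; exact h01)
    exact hTnontriv (Finsupp.single_eq_zero.1 hc)
  have hbottop : (⊥ : TwoSidedIdeal S) ≠ ⊤ := by
    intro h
    have h1 : (1 : S) ∈ (⊥ : TwoSidedIdeal S) := h ▸ TwoSidedIdeal.mem_top S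
    exact one_ne_zero ((TwoSidedIdeal.mem_bot S).1 h1)
  haveI : Nontrivial (TwoSidedIdeal S) := ⟨⊥, ⊤, hbottop⟩
  refine ⟨⟨fun I => ?_⟩⟩
  by_cases hI : I = ⊥
  · exact Or.inl hI
  refine Or.inr ?_
  -- find a nonzero element of I
  have hex : ∃ s, s ∈ I ∧ s ≠ 0 := by
    by_contra h
    push_neg at h
    exact hI (SetLike.ext fun x =>
      ⟨fun hx => (TwoSidedIdeal.mem_bot S).2 (h x hx),
       fun hx => by rw [(TwoSidedIdeal.mem_bot S).1 hx]; exact zero_mem I⟩)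
  obtain ⟨s, hsI, hs0⟩ := hex
  -- minimal support size
  set P : ℕ → Prop := fun n => ∃ c : G →₀ LocallyConstant X k,
    c ≠ 0 ∧ c.sum (fun g r => ι r * σ g) ∈ I ∧ c.support.card = n with hPdef
  have hP : ∃ n, P n := by
    obtain ⟨c₀, hc₀, -⟩ := hS.repr_existsUnique s
    refine ⟨c₀.support.card, c₀, fun h => hs0 (by rw [hc₀, h, Finsupp.sum_zero_index]),
      hc₀ ▸ hsI, rfl⟩
  set n := Nat.find hP with hndef
  obtain ⟨c, hc0, hcI, hccard⟩ := Nat.find_spec hP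
  have hmin : ∀ d : G →₀ LocallyConstant X k, d ≠ 0 →
      d.sum (fun g r => ι r * σ g) ∈ I → n ≤ d.support.card := by
    intro d h1 h2
    by_contra h
    push_neg at h
    exact Nat.find_min hP h ⟨d, h1, h2, rfl⟩
  -- translate so that 1 is in the support
  obtain ⟨g₀, hg₀⟩ := Finsupp.support_nonempty_iff.2 hc0
  set e : G ≃ G := Equiv.mulRight g₀⁻¹ with hedef
  set c' : G →₀ LocallyConstant X k := Finsupp.equivMapDomain e c with hc'def
  have hc'app : ∀ g : G, c' g = c (g * g₀) := by
    intro g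
    rw [hc'def, Finsupp.equivMapDomain_apply]
    simp [hedef]
  have hc'sum : c'.sum (fun g r => ι r * σ g) =
      (c.sum (fun g r => ι r * σ g)) * σ g₀⁻¹ := by
    rw [Finsupp.sum, Finsupp.sum,
      show c'.support = c.support.map e.toEmbedding from rfl, Finset.sum_map,
      Finset.sum_mul]
    refine Finset.sum_congr rfl fun g hg => ?_
    have h1 : c' (e.toEmbedding g) = c g := by
      rw [show (e.toEmbedding g) = e g from rfl, hc'def, Finsupp.equivMapDomain_apply,
        Equiv.symm_apply_apply]
    rw [h1, show (e.toEmbedding g) = g * g₀⁻¹ from rfl, mul_assoc, ← map_mul]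
  have hc'I : c'.sum (fun g r => ι r * σ g) ∈ I := by
    rw [hc'sum]
    exact I.mul_mem_right _ _ hcI
  have h1mem : c' 1 ≠ 0 := by
    rw [hc'app, one_mul]
    exact Finsupp.mem_support_iff.1 hg₀
  have h1supp : (1 : G) ∈ c'.support := Finsupp.mem_support_iff.2 h1mem
  have hc'0 : c' ≠ 0 := fun h => h1mem (by rw [h]; rfl)
  have hc'card : c'.support.card = n := by
    rw [show c'.support = c.support.map e.toEmbedding from rfl, Finset.card_map, hccard]
  -- commutator argument
  have hkey : ∀ (t : LocallyConstant X k) (g : G), t * c' g - c' g * α g t = 0 := by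
    intro t g
    by_cases hg : g ∈ c'.support
    case neg =>
      rw [Finsupp.notMem_support_iff.1 hg]
      simp
    set d : G →₀ LocallyConstant X k :=
      Finsupp.onFinset c'.support (fun g => t * c' g - c' g * α g t)
        (fun g hgd => Finsupp.mem_support_iff.2 (fun h0 => hgd (by simp [h0])))
      with hddef
    have hdsum : d.sum (fun g r => ι r * σ g) =
        ι t * c'.sum (fun g r => ι r * σ g) - c'.sum (fun g r => ι r * σ g) * ι t := by
      rw [Finsupp.sum_of_support_subset d Finsupp.support_onFinset_subset _
        (fun i _ => by simp), Finsupp.sum, Finset.mul_sum, Finset.sum_mul,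
        ← Finset.sum_sub_distrib]
      refine Finset.sum_congr rfl fun a ha => ?_
      rw [Finsupp.onFinset_apply, map_sub, sub_mul, map_mul, map_mul, mul_assoc,
        mul_assoc, ← hS.commutes a t, ← mul_assoc, ← mul_assoc]
    have hd1 : d 1 = 0 := by
      rw [hddef, Finsupp.onFinset_apply, map_one α]
      show t * c' 1 - c' 1 * ((1 : RingAut (LocallyConstant X k)) t) = 0
      rw [show ((1 : RingAut (LocallyConstant X k)) t) = t from rfl, mul_comm, sub_self]
    have hd : d = 0 := by
      by_contra hd0
      have hdI : d.sum (fun g r => ι r * σ g) ∈ I := by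
        rw [hdsum]
        exact I.sub_mem (I.mul_mem_left _ _ hc'I) (I.mul_mem_right _ _ hc'I)
      have hle := hmin d hd0 hdI
      have hsub : d.support ⊆ c'.support.erase 1 := fun a ha =>
        Finset.mem_erase.2 ⟨fun h1 => (Finsupp.mem_support_iff.1 ha) (h1 ▸ hd1),
          Finsupp.support_onFinset_subset ha⟩
      have hcard : d.support.card ≤ c'.support.card - 1 :=
        (Finset.card_le_card hsub).trans (le_of_eq (Finset.card_erase_of_mem h1supp))
      have hpos : 0 < n := hc'card ▸ Finset.card_pos.2 ⟨1, h1supp⟩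
      omega
    have := congrFun (congrArg DFunLike.coe hd) g
    rwa [hddef, Finsupp.onFinset_apply] at this
  -- the support of c' is {1}
  have hsupp : c'.support ⊆ {1} := by
    intro g hg
    rw [Finset.mem_singleton]
    by_contra hg1
    have hcg : c' g ≠ 0 := Finsupp.mem_support_iff.1 hg
    obtain ⟨x, hx⟩ : ∃ x, c' g x ≠ 0 := by
      by_contra h
      push_neg at h
      exact hcg (by ext y; simp [h y])
    have hgx : x ≠ (g : X)⁻¹ * x := by
      intro h
      apply hg1
      have h2 : (g : X)⁻¹ * x = 1 * x := by rw [one_mul, ← h]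
      have h3 : (g : X)⁻¹ = 1 := (mul_left_inj x).1 h2
      exact OneMemClass.coe_eq_one.1 (inv_eq_one.1 h3)
    obtain ⟨V, hV, hxV, hgxV⟩ := exists_isClopen_of_totally_separated hgx
    have heq := hkey (LocallyConstant.charFn k hV) g
    have hev : (LocallyConstant.charFn k hV) x * c' g x
        - c' g x * (α g (LocallyConstant.charFn k hV)) x = 0 := by
      have h2 := congrArg (LocallyConstant.evalRingHom x) heq
      rw [map_sub, map_mul, map_mul] at h2
      simpa using h2
    rw [hα, skr_charFn_apply hV, skr_charFn_apply hV, if_pos hxV,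
      if_neg (Set.notMem_of_mem_compl hgxV), one_mul, mul_zero, sub_zero] at hev
    exact hx hev
  have hc'single : c' = Finsupp.single 1 (c' 1) := Finsupp.support_subset_singleton.1 hsupp
  have hιmem : ι (c' 1) ∈ I := by
    have h2 : c'.sum (fun g r => ι r * σ g) = ι (c' 1) := by
      conv_lhs => rw [hc'single]
      rw [Finsupp.sum_single_index (by simp), map_one σ, mul_one]
    rw [← h2]
    exact hc'I
  exact skr_aux_top G hG α hα ι σ hS I (c' 1) h1mem hιmem
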